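/- Let $B_1, B_2, \ldots$ be independent Bernoulli random variables with $B_i \sim \mathrm{Bernoulli}(p_i)$. Then for any positive integer $r$ and any real $\nu > 0$, $\mathbb{P}\left(\sup_{k \ge r} \left|\frac{1}{k}\sum_{i=1}^{k}(B_i - p_i)\right| > \nu\right) \le \left(2 + \frac{4}{\nu^2}\right) e^{-r\nu^2/2}$. -/

import Mathlib

open MeasureTheory ProbabilityTheory

lemma bmi_integrable_of_bdd {Ω : Type*} [MeasurableSpace Ω] {μ : Measure Ω} [IsFiniteMeasure μ]
    {f : Ω → ℝ} (hf : Measurable f) (C : ℝ) (h : ∀ ω, |f ω| ≤ C) : Integrable f μ :=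
  (integrable_const C).mono' hf.aestronglyMeasurable (ae_of_all _ fun ω => by
    simpa using h ω)

lemma bmi_mgf_le {Ω : Type*} [MeasurableSpace Ω] {μ : Measure Ω} [IsProbabilityMeasure μ]
    {Y : Ω → ℝ} (hY : Measurable Y) (hb : ∀ ω, |Y ω| ≤ 1) (h0 : ∫ ω, Y ω ∂μ = 0) (t : ℝ) :
    mgf Y μ t ≤ Real.exp (t ^ 2 / 2) := by
  have hint : Integrable Y μ := bmi_integrable_of_bdd hY 1 hb
  have key : ∀ ω, Real.exp (t * Y ω) ≤
      (Real.exp (-t) + Real.exp t) / 2 + Y ω * ((Real.exp t - Real.exp (-t)) / 2) := by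
    intro ω
    obtain ⟨h1, h2⟩ := abs_le.mp (hb ω)
    have ha : (0:ℝ) ≤ (1 - Y ω) / 2 := by linarith
    have hb' : (0:ℝ) ≤ (1 + Y ω) / 2 := by linarith
    have hc := convexOn_exp.2 (Set.mem_univ (-t)) (Set.mem_univ t) ha hb' (by ring)
    simp only [smul_eq_mul] at hc
    have he : (1 - Y ω) / 2 * (-t) + (1 + Y ω) / 2 * t = t * Y ω := by ring
    rw [he] at hc
    calc Real.exp (t * Y ω) ≤ (1 - Y ω) / 2 * Real.exp (-t) + (1 + Y ω) / 2 * Real.exp t := hc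
      _ = (Real.exp (-t) + Real.exp t) / 2 + Y ω * ((Real.exp t - Real.exp (-t)) / 2) := by ring
  have hintL : Integrable (fun ω => Real.exp (t * Y ω)) μ := by
    refine bmi_integrable_of_bdd ((hY.const_mul t).exp) (Real.exp |t|) fun ω => ?_
    rw [abs_of_pos (Real.exp_pos _)]
    refine Real.exp_le_exp.mpr ?_
    calc t * Y ω ≤ |t * Y ω| := le_abs_self _
      _ = |t| * |Y ω| := abs_mul _ _
      _ ≤ |t| * 1 := by gcongr; exact hb ω
      _ = |t| := mul_one _
  have hintR : Integrable
      (fun ω => (Real.exp (-t) + Real.exp t) / 2 + Y ω * ((Real.exp t - Real.exp (-t)) / 2)) μ :=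
    (integrable_const _).add (hint.mul_const _)
  have hle : mgf Y μ t ≤ ∫ ω, ((Real.exp (-t) + Real.exp t) / 2
      + Y ω * ((Real.exp t - Real.exp (-t)) / 2)) ∂μ :=
    integral_mono hintL hintR key
  have heq : ∫ ω, ((Real.exp (-t) + Real.exp t) / 2
      + Y ω * ((Real.exp t - Real.exp (-t)) / 2)) ∂μ = (Real.exp (-t) + Real.exp t) / 2 := by
    rw [integral_add (integrable_const _) (hint.mul_const _), integral_const,
      integral_mul_const, h0]
    simp
  have hcosh : (Real.exp (-t) + Real.exp t) / 2 = Real.cosh t := by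
    rw [Real.cosh_eq]; ring
  calc mgf Y μ t ≤ (Real.exp (-t) + Real.exp t) / 2 := heq ▸ hle
    _ = Real.cosh t := hcosh
    _ ≤ Real.exp (t ^ 2 / 2) := Real.cosh_le_exp_half_sq t

/-- Maximal concentration inequality for independent Bernoulli variables: if
`B i ~ Bernoulli(p i)` are independent, then for any positive integer `r` and `ν > 0`,
`P(sup_{k ≥ r} |(1/k) ∑_{i=1}^k (B i - p i)| > ν) ≤ (2 + 4/ν²) e^{-rν²/2}`. -/
theorem bernoulli_maximal_inequality {Ω : Type*} [MeasurableSpace Ω]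
    (μ : Measure Ω) [IsProbabilityMeasure μ]
    (B : ℕ → Ω → ℝ) (p : ℕ → ℝ)
    (hmeas : ∀ i, Measurable (B i))
    (hp : ∀ i, p i ∈ Set.Icc (0 : ℝ) 1)
    (hval : ∀ i ω, B i ω = 0 ∨ B i ω = 1)
    (hbern : ∀ i, μ {ω | B i ω = 1} = ENNReal.ofReal (p i))
    (hindep : iIndepFun B μ)
    (r : ℕ) (hr : 0 < r) (ν : ℝ) (hν : 0 < ν) :
    μ {ω | ∃ k : ℕ, r ≤ k ∧
        ν < |(∑ i ∈ Finset.range k, (B i ω - p i)) / k|}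
      ≤ ENNReal.ofReal ((2 + 4 / ν ^ 2) * Real.exp (-(r : ℝ) * ν ^ 2 / 2)) := by
  set Y : ℕ → Ω → ℝ := fun i ω => B i ω - p i with hYdef
  have hYmeas : ∀ i, Measurable (Y i) := fun i => (hmeas i).sub_const _
  have hYb : ∀ i ω, |Y i ω| ≤ 1 := by
    intro i ω
    obtain ⟨h0, h1⟩ := hp i
    rcases hval i ω with h | h <;> simp only [hYdef, h] <;> rw [abs_le] <;>
      constructor <;> linarith
  -- mean zero
  have hEB : ∀ i, ∫ ω, B i ω ∂μ = p i := by
    intro i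
    have hs : MeasurableSet {ω | B i ω = 1} := hmeas i (measurableSet_singleton 1)
    have hBi : B i = Set.indicator {ω | B i ω = 1} (fun _ => (1:ℝ)) := by
      funext ω
      rcases hval i ω with h | h <;> simp [Set.indicator_apply, h]
    rw [hBi, integral_indicator_const _ hs, measureReal_def, hbern i, smul_eq_mul, mul_one,
      ENNReal.toReal_ofReal (hp i).1]
  have hEY : ∀ i, ∫ ω, Y i ω ∂μ = 0 := by
    intro i
    have hBint : Integrable (B i) μ := by
      refine bmi_integrable_of_bdd (hmeas i) 1 fun ω => ?_
      rcases hval i ω with h | h <;> simp [h]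
    simp only [hYdef]
    rw [integral_sub hBint (integrable_const _), integral_const, hEB i]
    simp
  have hYindep : iIndepFun Y μ :=
    hindep.comp (fun i x => x - p i) (fun i => measurable_id.sub_const _)
  -- mgf of partial sums
  have hmgf : ∀ (k : ℕ) (t : ℝ),
      mgf (∑ i ∈ Finset.range k, Y i) μ t ≤ Real.exp ((k : ℝ) * t ^ 2 / 2) := by
    intro k t
    rw [hYindep.mgf_sum hYmeas]
    calc ∏ i ∈ Finset.range k, mgf (Y i) μ t
        ≤ ∏ _i ∈ Finset.range k, Real.exp (t ^ 2 / 2) :=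
          Finset.prod_le_prod (fun i _ => mgf_nonneg)
            (fun i _ => bmi_mgf_le (hYmeas i) (hYb i) (hEY i) t)
      _ = Real.exp ((k : ℝ) * t ^ 2 / 2) := by
          rw [Finset.prod_const, Finset.card_range, ← Real.exp_nat_mul]
          ring_nf
  -- tail bound for each k
  have htail : ∀ k : ℕ, 0 < k →
      μ {ω | ν < |(∑ i ∈ Finset.range k, (B i ω - p i)) / k|}
        ≤ ENNReal.ofReal (2 * Real.exp (-(k : ℝ) * ν ^ 2 / 2)) := by
    intro k hk
    set S : Ω → ℝ := ∑ i ∈ Finset.range k, Y i with hSdef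
    have hSapp : ∀ ω, S ω = ∑ i ∈ Finset.range k, (B i ω - p i) := by
      intro ω; simp [hSdef, hYdef, Finset.sum_apply]
    have hSmeas : Measurable S := by
      have h : Measurable fun ω => ∑ i ∈ Finset.range k, Y i ω :=
        Finset.measurable_sum _ fun i _ => hYmeas i
      have hfun : S = fun ω => ∑ i ∈ Finset.range k, Y i ω := by
        funext ω; exact Finset.sum_apply ω (Finset.range k) Y
      rw [hfun]; exact h
    have hSb : ∀ ω, |S ω| ≤ (k : ℝ) := by
      intro ω
      calc |S ω| ≤ ∑ i ∈ Finset.range k, |Y i ω| := by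
            rw [hSdef]; simpa [Finset.sum_apply] using
              Finset.abs_sum_le_sum_abs (fun i => Y i ω) (Finset.range k)
        _ ≤ ∑ _i ∈ Finset.range k, (1 : ℝ) :=
            Finset.sum_le_sum fun i _ => hYb i ω
        _ = (k : ℝ) := by simp
    have hintc : ∀ t : ℝ, Integrable (fun ω => Real.exp (t * S ω)) μ := by
      intro t
      refine bmi_integrable_of_bdd ((hSmeas.const_mul t).exp) (Real.exp (|t| * k)) fun ω => ?_
      rw [abs_of_pos (Real.exp_pos _)]
      refine Real.exp_le_exp.mpr ?_
      calc t * S ω ≤ |t * S ω| := le_abs_self _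
        _ = |t| * |S ω| := abs_mul _ _
        _ ≤ |t| * k := by gcongr; exact hSb ω
    have hkpos : (0:ℝ) < k := Nat.cast_pos.mpr hk
    have hup : (μ {ω | (k : ℝ) * ν ≤ S ω}).toReal ≤ Real.exp (-(k : ℝ) * ν ^ 2 / 2) := by
      calc (μ {ω | (k : ℝ) * ν ≤ S ω}).toReal
          ≤ Real.exp (-ν * ((k : ℝ) * ν)) * mgf S μ ν :=
            measure_ge_le_exp_mul_mgf _ hν.le (hintc ν)
        _ ≤ Real.exp (-ν * ((k : ℝ) * ν)) * Real.exp ((k : ℝ) * ν ^ 2 / 2) := by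
            gcongr; exact hmgf k ν
        _ = Real.exp (-(k : ℝ) * ν ^ 2 / 2) := by
            rw [← Real.exp_add]; ring_nf
    have hdown : (μ {ω | S ω ≤ -((k : ℝ) * ν)}).toReal ≤ Real.exp (-(k : ℝ) * ν ^ 2 / 2) := by
      calc (μ {ω | S ω ≤ -((k : ℝ) * ν)}).toReal
          ≤ Real.exp (-(-ν) * -((k : ℝ) * ν)) * mgf S μ (-ν) :=
            measure_le_le_exp_mul_mgf _ (neg_nonpos.mpr hν.le) (hintc (-ν))
        _ ≤ Real.exp (-(-ν) * -((k : ℝ) * ν)) * Real.exp ((k : ℝ) * (-ν) ^ 2 / 2) := by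
            gcongr; exact hmgf k (-ν)
        _ = Real.exp (-(k : ℝ) * ν ^ 2 / 2) := by
            rw [← Real.exp_add]; ring_nf
    have hsub : {ω | ν < |(∑ i ∈ Finset.range k, (B i ω - p i)) / k|}
        ⊆ {ω | (k : ℝ) * ν ≤ S ω} ∪ {ω | S ω ≤ -((k : ℝ) * ν)} := by
      intro ω hω
      simp only [Set.mem_setOf_eq] at hω
      rw [← hSapp ω, abs_div, abs_of_pos hkpos, lt_div_iff₀ hkpos] at hω
      rcases lt_abs.mp hω with h | h
      · left; simp only [Set.mem_setOf_eq]; linarith [mul_comm ν (k:ℝ)]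
      · right; simp only [Set.mem_setOf_eq]; nlinarith
    calc μ {ω | ν < |(∑ i ∈ Finset.range k, (B i ω - p i)) / k|}
        ≤ μ ({ω | (k : ℝ) * ν ≤ S ω} ∪ {ω | S ω ≤ -((k : ℝ) * ν)}) := measure_mono hsub
      _ ≤ μ {ω | (k : ℝ) * ν ≤ S ω} + μ {ω | S ω ≤ -((k : ℝ) * ν)} := measure_union_le _ _
      _ ≤ ENNReal.ofReal (Real.exp (-(k : ℝ) * ν ^ 2 / 2))
          + ENNReal.ofReal (Real.exp (-(k : ℝ) * ν ^ 2 / 2)) := by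
          gcongr
          · rw [← ENNReal.ofReal_toReal (measure_ne_top μ _)]
            exact ENNReal.ofReal_le_ofReal hup
          · rw [← ENNReal.ofReal_toReal (measure_ne_top μ _)]
            exact ENNReal.ofReal_le_ofReal hdown
      _ = ENNReal.ofReal (2 * Real.exp (-(k : ℝ) * ν ^ 2 / 2)) := by
          rw [← ENNReal.ofReal_add (Real.exp_pos _).le (Real.exp_pos _).le]
          ring_nf
  -- union bound
  set q : ℝ := Real.exp (-(ν ^ 2 / 2)) with hqdef
  have hq0 : 0 ≤ q := (Real.exp_pos _).le
  have hq1 : q < 1 := by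
    rw [hqdef, Real.exp_lt_one_iff]
    nlinarith
  have hterm : ∀ j : ℕ, 2 * Real.exp (-((r + j : ℕ) : ℝ) * ν ^ 2 / 2)
      = (2 * Real.exp (-(r : ℝ) * ν ^ 2 / 2)) * q ^ j := by
    intro j
    rw [hqdef, ← Real.exp_nat_mul, mul_assoc, ← Real.exp_add]
    push_cast
    ring_nf
  have hsubU : {ω | ∃ k : ℕ, r ≤ k ∧ ν < |(∑ i ∈ Finset.range k, (B i ω - p i)) / k|}
      ⊆ ⋃ j : ℕ, {ω | ν < |(∑ i ∈ Finset.range (r + j), (B i ω - p i)) / (r + j : ℕ)|} := by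
    rintro ω ⟨k, hk, hων⟩
    refine Set.mem_iUnion.mpr ⟨k - r, ?_⟩
    simp only [Set.mem_setOf_eq]
    rwa [Nat.add_sub_cancel' hk]
  have hsum : Summable (fun j : ℕ => (2 * Real.exp (-(r : ℝ) * ν ^ 2 / 2)) * q ^ j) :=
    (summable_geometric_of_lt_one hq0 hq1).mul_left _
  calc μ {ω | ∃ k : ℕ, r ≤ k ∧ ν < |(∑ i ∈ Finset.range k, (B i ω - p i)) / k|}
      ≤ μ (⋃ j : ℕ, {ω | ν < |(∑ i ∈ Finset.range (r + j), (B i ω - p i)) / (r + j : ℕ)|}) :=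
        measure_mono hsubU
    _ ≤ ∑' j : ℕ, μ {ω | ν < |(∑ i ∈ Finset.range (r + j), (B i ω - p i)) / (r + j : ℕ)|} :=
        measure_iUnion_le _
    _ ≤ ∑' j : ℕ, ENNReal.ofReal (2 * Real.exp (-((r + j : ℕ) : ℝ) * ν ^ 2 / 2)) :=
        ENNReal.tsum_le_tsum fun j => htail (r + j) (by omega)
    _ = ∑' j : ℕ, ENNReal.ofReal ((2 * Real.exp (-(r : ℝ) * ν ^ 2 / 2)) * q ^ j) := by
        simp_rw [hterm]
    _ = ENNReal.ofReal (∑' j : ℕ, (2 * Real.exp (-(r : ℝ) * ν ^ 2 / 2)) * q ^ j) :=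
        (ENNReal.ofReal_tsum_of_nonneg
          (fun j => by positivity) hsum).symm
    _ = ENNReal.ofReal ((2 * Real.exp (-(r : ℝ) * ν ^ 2 / 2)) * (1 - q)⁻¹) := by
        rw [tsum_mul_left, tsum_geometric_of_lt_one hq0 hq1]
    _ ≤ ENNReal.ofReal ((2 + 4 / ν ^ 2) * Real.exp (-(r : ℝ) * ν ^ 2 / 2)) := by
        refine ENNReal.ofReal_le_ofReal ?_
        set x : ℝ := ν ^ 2 / 2 with hxdef
        have hx : 0 < x := by positivity
        have h1q : 0 < 1 - q := by linarith
        have hkey : (x + 1) * q ≤ 1 := by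
          have h2 : x + 1 ≤ Real.exp x := Real.add_one_le_exp x
          have h3 : q = (Real.exp x)⁻¹ := by rw [hqdef, Real.exp_neg]
          rw [h3]
          rw [mul_inv_le_iff₀ (Real.exp_pos x), one_mul]
          exact h2
        have hmain : (1 - q)⁻¹ ≤ (x + 1) / x := by
          rw [inv_le_iff_one_le_mul₀' h1q, mul_div_assoc', le_div_iff₀ hx, one_mul]
          nlinarith
        have h4 : 2 + 4 / ν ^ 2 = 2 * ((x + 1) / x) := by
          rw [hxdef]; field_simp; ring
        calc 2 * Real.exp (-(r : ℝ) * ν ^ 2 / 2) * (1 - q)⁻¹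
            ≤ 2 * Real.exp (-(r : ℝ) * ν ^ 2 / 2) * ((x + 1) / x) := by
              gcongr
            _ = (2 + 4 / ν ^ 2) * Real.exp (-(r : ℝ) * ν ^ 2 / 2) := by
              rw [h4]; ring
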